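/- Let Φ be a reduced crystallographic root system with simple roots α_1, …, α_n, coroot lattice R^∨, coweight lattice Q^∨, and Weyl group W, and let w₀ ∈ W satisfy w₀² = I. Let η′ ∈ Q^∨ with ⟨α_i, η′⟩ = 1, and let ζ′ ∈ Q^∨ with ζ′ − η′ ∈ R^∨ and proj_i(w₀ζ′) = proj_i(η′). Then: (1) there exists an integer d′ ∈ ℤ with s_i w₀ ζ′ − η′ = d′·α_i^∨; and (2) for this d′, setting y′ := t^{d′·w₀s_iη′}(w₀s_i) ∈ W̃, one has y′ (t^{η′} s_i) (y′)⁻¹ = t^{ζ′}(w₀ s_i w₀). -/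
import Mathlib


open scoped RealInnerProductSpace

namespace ADLV

variable {V : Type*} [NormedAddCommGroup V] [InnerProductSpace ℝ V]

/-- The coroot `α^∨ = 2α/(α,α)` of a root `α`. -/
noncomputable def coroot (α : V) : V := (2 / ⟪α, α⟫) • α

/-- The reflection `s_α : x ↦ x - ⟨α, x⟩ α^∨` in the hyperplane orthogonal to `α`,
as a linear automorphism. -/
noncomputable def sRefl (α : V) (hα : α ≠ 0) : V ≃ₗ[ℝ] V :=
  Module.reflection (f := (innerSL ℝ α : V →ₗ[ℝ] ℝ)) (x := coroot α)
    (by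
      have h : ⟪α, α⟫ ≠ 0 := inner_self_ne_zero.mpr hα
      simp [coroot, real_inner_smul_right]
      field_simp)

/-- The orthogonal projection `proj_α : x ↦ x - ½⟨α, x⟩ α^∨` of `V` onto the
hyperplane `H_α = {x : ⟨α, x⟩ = 0}`. -/
noncomputable def projH (α : V) (x : V) : V := x - (⟪α, x⟫ / 2) • coroot α

/-- The (finite) Weyl group: the group generated by the simple reflections. -/
noncomputable def weylGroup {n : ℕ} (α : Fin n → V) (hα : ∀ j, α j ≠ 0) :
    Subgroup (V ≃ₗ[ℝ] V) :=
  Subgroup.closure (Set.range fun j => sRefl (α j) (hα j))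

/-- The coroot lattice `R^∨ = ⊕_j ℤ α_j^∨`. -/
noncomputable def corootLattice {n : ℕ} (α : Fin n → V) : AddSubgroup V :=
  AddSubgroup.closure (Set.range fun j => coroot (α j))

/-- The coweight lattice `Q^∨ = {x : ⟨α_j, x⟩ ∈ ℤ for all j}`. -/
def coweightLattice {n : ℕ} (α : Fin n → V) : Set V :=
  {x : V | ∀ j, ∃ m : ℤ, ⟪α j, x⟫ = (m : ℝ)}

/-- Elements `t^μ u` of the (extended) affine Weyl group `Q^∨ ⋊ W`, realized inside the
semidirect product `V ⋊ GL(V)` with multiplication `(t^μ u)(t^λ v) = t^{μ + uλ}(uv)`. -/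
@[ext]
structure Aff (V : Type*) [NormedAddCommGroup V] [InnerProductSpace ℝ V] where
  /-- the translation part -/
  t : V
  /-- the linear part -/
  w : V ≃ₗ[ℝ] V

namespace Aff

instance : Mul (Aff V) := ⟨fun a b => ⟨a.t + a.w b.t, a.w * b.w⟩⟩
instance : One (Aff V) := ⟨⟨0, 1⟩⟩
instance : Inv (Aff V) := ⟨fun a => ⟨-(a.w⁻¹ a.t), a.w⁻¹⟩⟩

@[simp] lemma mul_t (a b : Aff V) : (a * b).t = a.t + a.w b.t := rfl
@[simp] lemma mul_w (a b : Aff V) : (a * b).w = a.w * b.w := rfl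
@[simp] lemma one_t : (1 : Aff V).t = 0 := rfl
@[simp] lemma one_w : (1 : Aff V).w = 1 := rfl
@[simp] lemma inv_t (a : Aff V) : (a⁻¹).t = -(a.w⁻¹ a.t) := rfl
@[simp] lemma inv_w (a : Aff V) : (a⁻¹).w = a.w⁻¹ := rfl

lemma mul_apply_w (f g : V ≃ₗ[ℝ] V) (x : V) : (f * g) x = f (g x) := rfl

instance : Group (Aff V) where
  mul_assoc a b c := by
    refine Aff.ext ?_ ?_
    · simp [mul_apply_w, map_add, add_assoc]
    · simp [mul_assoc]
  one_mul a := by refine Aff.ext ?_ ?_ <;> simp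
  mul_one a := by refine Aff.ext ?_ ?_ <;> simp
  inv_mul_cancel a := by
    refine Aff.ext ?_ ?_
    · simp [mul_apply_w]
    · simp

end Aff

section Aux

lemma sRefl_apply (α : V) (hα : α ≠ 0) (x : V) :
    sRefl α hα x = x - ⟪α, x⟫ • coroot α := by
  have h : (innerSL ℝ α : V →ₗ[ℝ] ℝ) (coroot α) = 2 := by
    have h : ⟪α, α⟫ ≠ 0 := inner_self_ne_zero.mpr hα
    simp [coroot, real_inner_smul_right]
    field_simp
  exact Module.reflection_apply (f := (innerSL ℝ α : V →ₗ[ℝ] ℝ)) (x := coroot α) x h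

lemma sRefl_coroot (α : V) (hα : α ≠ 0) :
    sRefl α hα (coroot α) = - coroot α := by
  rw [sRefl_apply]
  have h : ⟪α, α⟫ ≠ 0 := inner_self_ne_zero.mpr hα
  rw [coroot, real_inner_smul_right]
  rw [show 2 / ⟪α, α⟫ * ⟪α, α⟫ = 2 by field_simp]
  rw [show (2 : ℝ) • ((2 / ⟪α, α⟫) • α) = (2 / ⟪α, α⟫) • α + (2 / ⟪α, α⟫) • α by
    rw [two_smul]]
  abel

lemma sRefl_sRefl (α : V) (hα : α ≠ 0) (x : V) :
    sRefl α hα (sRefl α hα x) = x := by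
  rw [sRefl_apply, sRefl_apply, inner_sub_right, real_inner_smul_right]
  have h : ⟪α, α⟫ ≠ 0 := inner_self_ne_zero.mpr hα
  rw [show ⟪α, coroot α⟫ = 2 by
    rw [coroot, real_inner_smul_right]; field_simp]
  module

lemma sRefl_sq (α : V) (hα : α ≠ 0) : sRefl α hα * sRefl α hα = 1 := by
  ext x
  exact sRefl_sRefl α hα x

lemma sRefl_inv (α : V) (hα : α ≠ 0) : (sRefl α hα)⁻¹ = sRefl α hα :=
  inv_eq_of_mul_eq_one_right (sRefl_sq α hα)

/-- inner products with roots of coroot-lattice elements are integers -/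
lemma inner_int_of_mem_corootLattice {n : ℕ} {α : Fin n → V}
    (hcart : ∀ k j, ∃ m : ℤ, ⟪α k, coroot (α j)⟫ = (m : ℝ)) (k : Fin n)
    {x : V} (hx : x ∈ corootLattice α) : ∃ m : ℤ, ⟪α k, x⟫ = (m : ℝ) := by
  let H : AddSubgroup V :=
    { carrier := {x : V | ∃ m : ℤ, ⟪α k, x⟫ = (m : ℝ)}
      zero_mem' := ⟨0, by simp⟩
      add_mem' := by
        rintro a b ⟨p, hp⟩ ⟨q, hq⟩
        exact ⟨p + q, by rw [inner_add_right, hp, hq]; push_cast; ring⟩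
      neg_mem' := by
        rintro a ⟨p, hp⟩
        exact ⟨-p, by rw [inner_neg_right, hp]; push_cast; ring⟩ }
  have : corootLattice α ≤ H := by
    rw [corootLattice, AddSubgroup.closure_le]
    rintro y ⟨j, rfl⟩
    exact hcart k j
  exact this hx

lemma corootLattice_subset_coweightLattice {n : ℕ} {α : Fin n → V}
    (hcart : ∀ k j, ∃ m : ℤ, ⟪α k, coroot (α j)⟫ = (m : ℝ)) :
    ∀ {x : V}, x ∈ corootLattice α → x ∈ coweightLattice α := fun hx k =>
  inner_int_of_mem_corootLattice hcart k hx

/-- the key stability properties of Weyl group elements -/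
lemma weyl_stab {n : ℕ} {α : Fin n → V} (hα : ∀ j, α j ≠ 0)
    (hcart : ∀ k j, ∃ m : ℤ, ⟪α k, coroot (α j)⟫ = (m : ℝ))
    {w : V ≃ₗ[ℝ] V} (hw : w ∈ weylGroup α hα) :
    (∀ x ∈ coweightLattice α, w x ∈ coweightLattice α ∧ w x - x ∈ corootLattice α) ∧
    (∀ x ∈ coweightLattice α, w⁻¹ x ∈ coweightLattice α ∧ w⁻¹ x - x ∈ corootLattice α) := by
  set Q := coweightLattice α with hQ
  set R := corootLattice α with hR
  let H : Subgroup (V ≃ₗ[ℝ] V) :=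
    { carrier := {w : V ≃ₗ[ℝ] V |
        (∀ x ∈ Q, w x ∈ Q ∧ w x - x ∈ R) ∧
        (∀ x ∈ Q, w⁻¹ x ∈ Q ∧ w⁻¹ x - x ∈ R)}
      one_mem' := by
        constructor <;> intro x hx <;>
          refine ⟨by simpa using hx, by simpa using (corootLattice α).zero_mem⟩
      mul_mem' := by
        rintro a b ⟨ha1, ha2⟩ ⟨hb1, hb2⟩
        constructor
        · intro x hx
          have hbx := hb1 x hx
          have habx := ha1 _ hbx.1
          refine ⟨by simpa [Aff.mul_apply_w] using habx.1, ?_⟩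
          have : (a * b) x - x = (a (b x) - b x) + (b x - x) := by
            rw [Aff.mul_apply_w]; abel
          rw [this]
          exact (corootLattice α).add_mem habx.2 hbx.2
        · intro x hx
          have hax := ha2 x hx
          have hbax := hb2 _ hax.1
          rw [mul_inv_rev]
          refine ⟨by simpa [Aff.mul_apply_w] using hbax.1, ?_⟩
          have : (b⁻¹ * a⁻¹) x - x = (b⁻¹ (a⁻¹ x) - a⁻¹ x) + (a⁻¹ x - x) := by
            rw [Aff.mul_apply_w]; abel
          rw [this]
          exact (corootLattice α).add_mem hbax.2 hax.2
      inv_mem' := by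
        rintro a ⟨ha1, ha2⟩
        refine ⟨ha2, ?_⟩
        simpa using ha1 }
  have key : ∀ j : Fin n, ∀ x ∈ Q,
      sRefl (α j) (hα j) x ∈ Q ∧ sRefl (α j) (hα j) x - x ∈ R := by
    intro j x hx
    obtain ⟨m, hm⟩ := hx j
    have hsub : sRefl (α j) (hα j) x - x = -((m : ℝ) • coroot (α j)) := by
      rw [sRefl_apply, hm]; abel
    have hmem : sRefl (α j) (hα j) x - x ∈ R := by
      rw [hsub, Int.cast_smul_eq_zsmul ℝ]
      exact (corootLattice α).neg_mem <|
        AddSubgroup.zsmul_mem _ (AddSubgroup.subset_closure (Set.mem_range_self j)) m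
    refine ⟨?_, hmem⟩
    intro k
    obtain ⟨p, hp⟩ := hx k
    obtain ⟨q, hq⟩ := hcart k j
    refine ⟨p - m * q, ?_⟩
    rw [sRefl_apply, inner_sub_right, real_inner_smul_right, hp, hm, hq]
    push_cast; ring
  have hle : weylGroup α hα ≤ H := by
    rw [weylGroup, Subgroup.closure_le]
    rintro y ⟨j, rfl⟩
    constructor
    · exact key j
    · intro x hx
      rw [sRefl_inv]
      exact key j x hx
  exact hle hw

/-- coefficients of coroot-lattice elements along a single coroot are integers -/
lemma coeff_int {n : ℕ} {α : Fin n → V} (hα : ∀ j, α j ≠ 0)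
    (hlin : LinearIndependent ℝ α) (i : Fin n) {x : V} (hx : x ∈ corootLattice α)
    {c : ℝ} (hc : x = c • coroot (α i)) : ∃ m : ℤ, c = (m : ℝ) := by
  classical
  have hco : LinearIndependent ℝ (fun j => coroot (α j)) := by
    have hne : ∀ j, (2 / ⟪α j, α j⟫ : ℝ) ≠ 0 := fun j => by
      have : ⟪α j, α j⟫ ≠ 0 := inner_self_ne_zero.mpr (hα j)
      positivity
    have h2 := hlin.units_smul (fun j => Units.mk0 (2 / ⟪α j, α j⟫) (hne j))
    have he : (fun j => Units.mk0 (2 / ⟪α j, α j⟫) (hne j)) • α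
        = fun j => coroot (α j) := by
      funext j
      simp [coroot, Units.smul_def, Pi.smul_apply']
    rw [he] at h2
    exact h2
  have hx' : x ∈ Submodule.span ℤ (Set.range fun j => coroot (α j)) := by
    have hle : corootLattice α ≤
        (Submodule.span ℤ (Set.range fun j => coroot (α j))).toAddSubgroup := by
      rw [corootLattice, AddSubgroup.closure_le]
      exact fun y hy => Submodule.subset_span hy
    exact hle hx
  obtain ⟨g, hg⟩ := (Submodule.mem_span_range_iff_exists_fun ℤ).mp hx'
  have hg' : ∑ j, ((g j : ℝ)) • coroot (α j) = c • coroot (α i) := by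
    rw [← hc, ← hg]
    exact Finset.sum_congr rfl fun j _ => Int.cast_smul_eq_zsmul ℝ (g j) _
  refine ⟨g i, ?_⟩
  have hzero : ∑ j, ((g j : ℝ) - if j = i then c else 0) • coroot (α j) = 0 := by
    simp only [sub_smul, Finset.sum_sub_distrib, hg', ite_smul, zero_smul]
    simp
  have := Fintype.linearIndependent_iff.mp hco _ hzero i
  simp only [eq_self_iff_true, if_true] at this
  linarith

end Aux

/-- Let `w₀ ∈ W` satisfy `w₀² = I`.  Let `η′ ∈ Q^∨` with
`⟨α_i, η′⟩ = 1`, and let `ζ′ ∈ Q^∨` with `ζ′ - η′ ∈ R^∨` and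
`proj_i (w₀ ζ′) = proj_i (η′)`.  Then:
(1) there is `d′ ∈ ℤ` with `s_i w₀ ζ′ - η′ = d′ • α_i^∨`; and
(2) for this `d′`, setting `y′ := t^{d′ • w₀ s_i η′} (w₀ s_i) ∈ W̃`, one has
`y′ (t^{η′} s_i) (y′)⁻¹ = t^{ζ′} (w₀ s_i w₀)`. -/
theorem conjugation_to_modified_final_alcove {n : ℕ}
    (α : Fin n → V) (hα : ∀ j, α j ≠ 0)
    (hlin : LinearIndependent ℝ α)
    -- crystallographic: the Cartan integers `⟨α_k, α_j^∨⟩` are integers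
    (hcart : ∀ k j, ∃ m : ℤ, ⟪α k, coroot (α j)⟫ = (m : ℝ))
    (w₀ : V ≃ₗ[ℝ] V) (hw₀W : w₀ ∈ weylGroup α hα) (hw₀2 : w₀ * w₀ = 1)
    (i : Fin n) (η' ζ' : V)
    (hη' : η' ∈ coweightLattice α) (hη'i : ⟪α i, η'⟫ = 1)
    (hζ' : ζ' ∈ coweightLattice α) (hζ'η' : ζ' - η' ∈ corootLattice α)
    (hproj : projH (α i) (w₀ ζ') = projH (α i) η') :
    (∃ d : ℤ, sRefl (α i) (hα i) (w₀ ζ') - η' = (d : ℝ) • coroot (α i)) ∧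
    (∀ d : ℤ, sRefl (α i) (hα i) (w₀ ζ') - η' = (d : ℝ) • coroot (α i) →
      Aff.mk ((d : ℝ) • (w₀ (sRefl (α i) (hα i) η'))) (w₀ * sRefl (α i) (hα i))
          * Aff.mk η' (sRefl (α i) (hα i))
          * (Aff.mk ((d : ℝ) • (w₀ (sRefl (α i) (hα i) η'))) (w₀ * sRefl (α i) (hα i)))⁻¹
        = Aff.mk ζ' (w₀ * sRefl (α i) (hα i) * w₀)) := by
  have hww : ∀ x, w₀ (w₀ x) = x := by
    intro x
    have := congrArg (fun f : V ≃ₗ[ℝ] V => f x) hw₀2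
    simpa [Aff.mul_apply_w] using this
  have hw₀inv : w₀⁻¹ = w₀ := inv_eq_of_mul_eq_one_right hw₀2
  -- w₀ ζ' is in the coweight lattice and w₀ ζ' - η' is in the coroot lattice
  have hstab := (weyl_stab hα hcart hw₀W).1 ζ' hζ'
  have hwQ : w₀ ζ' ∈ coweightLattice α := hstab.1
  have hwR : w₀ ζ' - η' ∈ corootLattice α := by
    have : w₀ ζ' - η' = (w₀ ζ' - ζ') + (ζ' - η') := by abel
    rw [this]
    exact (corootLattice α).add_mem hstab.2 hζ'η'
  obtain ⟨m, hm⟩ := hwQ i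
  -- from the projection hypothesis
  have hdiff : w₀ ζ' - η' = (((m : ℝ) - 1) / 2) • coroot (α i) := by
    have h := hproj
    rw [projH, projH, hm, hη'i] at h
    have h2 := sub_eq_sub_iff_sub_eq_sub.mp h
    rw [h2, ← sub_smul]
    congr 1
    ring
  obtain ⟨p, hp⟩ := coeff_int hα hlin i hwR hdiff
  constructor
  · refine ⟨p - m, ?_⟩
    have hstep : sRefl (α i) (hα i) (w₀ ζ') - η'
        = (w₀ ζ' - η') - (m : ℝ) • coroot (α i) := by
      rw [sRefl_apply, hm]; abel
    rw [hstep, hdiff, hp, ← sub_smul]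
    congr 1
    push_cast
    ring
  · intro d hd
    set s := sRefl (α i) (hα i) with hs
    have hss : ∀ x, s (s x) = x := sRefl_sRefl (α i) (hα i)
    have hs2 : s * s = 1 := sRefl_sq (α i) (hα i)
    have hsinv : s⁻¹ = s := sRefl_inv (α i) (hα i)
    have hsη : s η' = η' - coroot (α i) := by
      rw [hs, sRefl_apply, hη'i, one_smul]
    have hsco : s (coroot (α i)) = - coroot (α i) := sRefl_coroot (α i) (hα i)
    -- from hd : s (w₀ ζ') = d • coroot + η'
    have h1 : s (w₀ ζ') = (d : ℝ) • coroot (α i) + η' := sub_eq_iff_eq_add.mp hd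
    have h2 := congrArg s h1
    rw [hss, map_add, map_smul, hsη, hsco] at h2
    have hkey : w₀ ζ' = η' - ((d : ℝ) + 1) • coroot (α i) := by
      rw [h2]; module
    have hζeq : ζ' = w₀ (η' - ((d : ℝ) + 1) • coroot (α i)) := by
      rw [← hkey, hww]
    refine Aff.ext ?_ ?_
    · -- translation parts
      simp only [Aff.mul_t, Aff.mul_w, Aff.inv_t, Aff.inv_w, Aff.mul_apply_w,
        mul_inv_rev, hsinv, hw₀inv, map_neg, map_smul, map_add, map_sub]
      rw [hss, hww, hss, hsη, hζeq]
      simp only [map_sub, map_smul, map_add]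
      module
    · -- linear parts
      simp only [Aff.mul_w, Aff.inv_w, mul_inv_rev, hsinv, hw₀inv]
      calc w₀ * s * s * (s * w₀) = w₀ * (s * s) * s * w₀ := by
            simp only [mul_assoc]
          _ = w₀ * s * w₀ := by rw [hs2]; simp [mul_assoc]

end ADLV
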